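/- Let p: R^d -> R be C^3 and s a critical point of p (gradient zero) whose Hessian H(s) has a positive eigenvalue lambda > 0 with unit eigenvector v. Then for all sufficiently small epsilon > 0 and any x with ||x - s|| <= epsilon, the point y = x + c*epsilon*v satisfies p(y) >= p(x) + (c^2 epsilon^2 lambda)/8, provided c > 0 is a sufficiently large constant depending only on lambda, the operator norm of H(s), and the bounds on the second and third derivatives of p. -/

import Mathlib

open Metric InnerProductSpace

set_option maxHeartbeats 1000000 in
/-- Escaping a saddle.  If `s` is a critical point of a `C³` function `p`
with bounded derivatives whose Hessian has a positive eigenvalue `lam` with unit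
eigenvector `v`, then for any sufficiently large constant `c` (depending only on `lam`,
`‖H(s)‖` and the derivative bounds) and all sufficiently small `ε > 0`: for every `x` with
`‖x - s‖ ≤ ε`, the point `y = x + c ε v` satisfies `p(y) ≥ p(x) + c² ε² lam / 8`. -/
theorem stmt10 {d : ℕ} (p : EuclideanSpace ℝ (Fin d) → ℝ) (hp : ContDiff ℝ 3 p)
    (A₂ A₃ : ℝ)
    (hA₂ : ∀ x, ‖iteratedFDeriv ℝ 2 p x‖ ≤ A₂)
    (hA₃ : ∀ x, ‖iteratedFDeriv ℝ 3 p x‖ ≤ A₃)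
    (s : EuclideanSpace ℝ (Fin d)) (hcrit : gradient p s = 0)
    (lam : ℝ) (hlam : 0 < lam) (v : EuclideanSpace ℝ (Fin d)) (hv : ‖v‖ = 1)
    (heig : ∀ w : EuclideanSpace ℝ (Fin d),
      (inner ℝ (fderiv ℝ (gradient p) s v) w : ℝ) = lam * (inner ℝ v w : ℝ)) :
    ∃ c₀ > (0 : ℝ), ∀ c : ℝ, c₀ ≤ c → ∃ ε₁ > (0 : ℝ), ∀ ε : ℝ, 0 < ε → ε ≤ ε₁ →
      ∀ x : EuclideanSpace ℝ (Fin d), ‖x - s‖ ≤ ε →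
        p x + c ^ 2 * ε ^ 2 * lam / 8 ≤ p (x + (c * ε) • v) := by
  have hA2nn : 0 ≤ A₂ := le_trans (norm_nonneg _) (hA₂ s)
  have hA3nn : 0 ≤ A₃ := le_trans (norm_nonneg _) (hA₃ s)
  have hGfun : gradient p =
      (InnerProductSpace.toDual ℝ (EuclideanSpace ℝ (Fin d))).symm ∘ fderiv ℝ p := rfl
  have hG2 : ContDiff ℝ 2 (gradient p) := by
    rw [hGfun]
    exact ((InnerProductSpace.toDual ℝ _).symm.contDiff).comp
      (hp.fderiv_right (by norm_num))
  have hnorm : ∀ (n : ℕ) x, ‖iteratedFDeriv ℝ n (gradient p) x‖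
      = ‖iteratedFDeriv ℝ (n + 1) p x‖ := by
    intro n x
    rw [hGfun, LinearIsometryEquiv.norm_iteratedFDeriv_comp_left, norm_iteratedFDeriv_fderiv]
  have hHnorm : ‖fderiv ℝ (gradient p) s‖ ≤ A₂ := by
    have h0 : ‖fderiv ℝ (gradient p) s‖ = ‖iteratedFDeriv ℝ 2 p s‖ := by
      rw [← norm_iteratedFDeriv_zero (𝕜 := ℝ) (f := fderiv ℝ (gradient p)) (x := s),
        norm_iteratedFDeriv_fderiv, hnorm 1 s]
    rw [h0]; exact hA₂ s
  have hD2 : ∀ y, ‖fderiv ℝ (fderiv ℝ (gradient p)) y‖ ≤ A₃ := by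
    intro y
    have h0 : ‖fderiv ℝ (fderiv ℝ (gradient p)) y‖ = ‖iteratedFDeriv ℝ 3 p y‖ := by
      rw [← norm_iteratedFDeriv_zero (𝕜 := ℝ) (f := fderiv ℝ (fderiv ℝ (gradient p))) (x := y),
        norm_iteratedFDeriv_fderiv, norm_iteratedFDeriv_fderiv, hnorm 2 y]
    rw [h0]; exact hA₃ y
  have hGdiff : Differentiable ℝ (gradient p) := hG2.differentiable (by norm_num)
  have hG'diff : Differentiable ℝ (fderiv ℝ (gradient p)) :=
    (hG2.fderiv_right (m := 1) (by norm_num)).differentiable (by norm_num)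
  have hLip : ∀ y, ‖fderiv ℝ (gradient p) y - fderiv ℝ (gradient p) s‖ ≤ A₃ * ‖y - s‖ :=
    fun y => Convex.norm_image_sub_le_of_norm_fderiv_le (fun z _ => hG'diff z)
      (fun z _ => hD2 z) convex_univ (Set.mem_univ s) (Set.mem_univ y)
  have hlin : ∀ y, HasFDerivAt (fun y => fderiv ℝ (gradient p) s (y - s))
      (fderiv ℝ (gradient p) s) y := by
    intro y
    have h := (fderiv ℝ (gradient p) s).hasFDerivAt.comp y ((hasFDerivAt_id y).sub_const s)
    simp only [Function.comp_def, ContinuousLinearMap.comp_id] at h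
    exact h
  have hTay : ∀ (R : ℝ), 0 ≤ R → ∀ z, ‖z - s‖ ≤ R →
      ‖gradient p z - fderiv ℝ (gradient p) s (z - s)‖ ≤ A₃ * R * ‖z - s‖ := by
    intro R hR z hz
    have hΦ : ∀ y ∈ closedBall s R,
        HasFDerivWithinAt (fun y => gradient p y - fderiv ℝ (gradient p) s (y - s))
          (fderiv ℝ (gradient p) y - fderiv ℝ (gradient p) s) (closedBall s R) y :=
      fun y _ => (((hGdiff y).hasFDerivAt).sub (hlin y)).hasFDerivWithinAt
    have hbound : ∀ y ∈ closedBall s R,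
        ‖fderiv ℝ (gradient p) y - fderiv ℝ (gradient p) s‖ ≤ A₃ * R := by
      intro y hy
      refine le_trans (hLip y) (mul_le_mul_of_nonneg_left ?_ hA3nn)
      simpa [dist_eq_norm] using hy
    have hmem : z ∈ closedBall s R := by simpa [dist_eq_norm] using hz
    have hsm : s ∈ closedBall s R := mem_closedBall_self hR
    have key := (convex_closedBall s R).norm_image_sub_le_of_norm_hasFDerivWithin_le
      hΦ hbound hsm hmem
    simpa [hcrit] using key
  have hinner : ∀ z w, fderiv ℝ p z w = (inner ℝ (gradient p z) w : ℝ) := by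
    intro z w
    exact (InnerProductSpace.toDual_symm_apply).symm
  have hHvv : ∀ (a : ℝ),
      (inner ℝ (fderiv ℝ (gradient p) s (a • v)) (a • v) : ℝ) = a ^ 2 * lam := by
    intro a
    rw [map_smul, real_inner_smul_left, heig (a • v), real_inner_smul_right,
      real_inner_self_eq_norm_sq, hv]
    ring
  refine ⟨max 1 (8 * A₂ / lam), lt_of_lt_of_le one_pos (le_max_left _ _), ?_⟩
  intro c hc
  have hc1 : (1 : ℝ) ≤ c := le_trans (le_max_left _ _) hc
  have hc0 : (0 : ℝ) < c := lt_of_lt_of_le one_pos hc1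
  have hcA : A₂ ≤ lam * c / 8 := by
    have h8 : 8 * A₂ / lam ≤ c := le_trans (le_max_right _ _) hc
    rw [div_le_iff₀ hlam] at h8
    nlinarith
  have h1c : (0 : ℝ) < 1 + c := by linarith
  have hden : (0 : ℝ) < 8 * (A₃ + 1) * (1 + c) ^ 2 :=
    mul_pos (by nlinarith) (pow_pos h1c 2)
  refine ⟨lam * c / (8 * (A₃ + 1) * (1 + c) ^ 2), div_pos (mul_pos hlam hc0) hden, ?_⟩
  intro ε hε hεε₁ x hx
  set u : EuclideanSpace ℝ (Fin d) := (c * ε) • v with hu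
  have hcε : 0 < c * ε := mul_pos hc0 hε
  have hunorm : ‖u‖ = c * ε := by
    rw [hu, norm_smul, hv, mul_one, Real.norm_eq_abs, abs_of_pos hcε]
  set K : ℝ := lam * (c * ε) ^ 2 with hK
  set B : ℝ := A₂ * ε * (c * ε) + A₃ * ((1 + c) * ε) ^ 2 * (c * ε) with hB
  have hHuu : (inner ℝ (fderiv ℝ (gradient p) s u) u : ℝ) = K := by
    rw [hu, hK, hHvv]; ring
  have hg' : ∀ t ∈ Set.Icc (0 : ℝ) 1, t * K - B ≤ fderiv ℝ p (x + t • u) u := by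
    intro t ht
    obtain ⟨ht0, ht1⟩ := ht
    have hzsub : (x + t • u) - s = (x - s) + t • u := by abel
    have hzs : ‖(x + t • u) - s‖ ≤ (1 + c) * ε := by
      rw [hzsub]
      have htu : ‖t • u‖ = t * (c * ε) := by
        rw [norm_smul, hunorm, Real.norm_eq_abs, abs_of_nonneg ht0]
      calc ‖(x - s) + t • u‖ ≤ ‖x - s‖ + ‖t • u‖ := norm_add_le _ _
        _ ≤ ε + 1 * (c * ε) := by
            rw [htu]
            have := mul_le_mul_of_nonneg_right ht1 (le_of_lt hcε)
            linarith
        _ = (1 + c) * ε := by ring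
    have hsplit : fderiv ℝ p (x + t • u) u =
        (inner ℝ (fderiv ℝ (gradient p) s ((x + t • u) - s)) u : ℝ)
        + (inner ℝ (gradient p (x + t • u)
            - fderiv ℝ (gradient p) s ((x + t • u) - s)) u : ℝ) := by
      rw [hinner (x + t • u) u, inner_sub_left]; ring
    have hHz : (inner ℝ (fderiv ℝ (gradient p) s ((x + t • u) - s)) u : ℝ)
        = (inner ℝ (fderiv ℝ (gradient p) s (x - s)) u : ℝ) + t * K := by
      rw [hzsub, map_add, inner_add_left, map_smul, real_inner_smul_left, hHuu]
    have hcross : -(A₂ * ε * (c * ε)) ≤ (inner ℝ (fderiv ℝ (gradient p) s (x - s)) u : ℝ) := by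
      have h1 : |(inner ℝ (fderiv ℝ (gradient p) s (x - s)) u : ℝ)|
          ≤ ‖fderiv ℝ (gradient p) s (x - s)‖ * ‖u‖ := abs_real_inner_le_norm _ _
      have h2 : ‖fderiv ℝ (gradient p) s (x - s)‖ ≤ A₂ * ε := by
        refine le_trans ((fderiv ℝ (gradient p) s).le_opNorm _) ?_
        exact mul_le_mul hHnorm hx (norm_nonneg _) hA2nn
      have h3 : ‖fderiv ℝ (gradient p) s (x - s)‖ * ‖u‖ ≤ A₂ * ε * (c * ε) := by
        rw [hunorm]
        exact mul_le_mul_of_nonneg_right h2 (le_of_lt hcε)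
      have h4 := neg_abs_le (inner ℝ (fderiv ℝ (gradient p) s (x - s)) u : ℝ)
      linarith
    have herr : -(A₃ * ((1 + c) * ε) ^ 2 * (c * ε))
        ≤ (inner ℝ (gradient p (x + t • u)
            - fderiv ℝ (gradient p) s ((x + t • u) - s)) u : ℝ) := by
      have hRnn : (0 : ℝ) ≤ (1 + c) * ε := le_of_lt (mul_pos h1c hε)
      have h1 := hTay ((1 + c) * ε) hRnn (x + t • u) hzs
      have h2 : ‖gradient p (x + t • u) - fderiv ℝ (gradient p) s ((x + t • u) - s)‖
          ≤ A₃ * ((1 + c) * ε) ^ 2 := by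
        calc ‖gradient p (x + t • u) - fderiv ℝ (gradient p) s ((x + t • u) - s)‖
            ≤ A₃ * ((1 + c) * ε) * ‖(x + t • u) - s‖ := h1
          _ ≤ A₃ * ((1 + c) * ε) * ((1 + c) * ε) :=
              mul_le_mul_of_nonneg_left hzs (mul_nonneg hA3nn hRnn)
          _ = A₃ * ((1 + c) * ε) ^ 2 := by ring
      have h3 : |(inner ℝ (gradient p (x + t • u)
            - fderiv ℝ (gradient p) s ((x + t • u) - s)) u : ℝ)|
          ≤ A₃ * ((1 + c) * ε) ^ 2 * (c * ε) := by
        refine le_trans (abs_real_inner_le_norm _ _) ?_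
        rw [hunorm]
        exact mul_le_mul_of_nonneg_right h2 (le_of_lt hcε)
      have h4 := neg_abs_le (inner ℝ (gradient p (x + t • u)
            - fderiv ℝ (gradient p) s ((x + t • u) - s)) u : ℝ)
      linarith
    rw [hsplit, hHz, hB]
    linarith
  have hpdiff : Differentiable ℝ p := hp.differentiable (by norm_num)
  have hline : ∀ t : ℝ, HasDerivAt (fun t : ℝ => x + t • u) u t := by
    intro t
    have h1 : HasDerivAt (fun t : ℝ => t • u) ((1 : ℝ) • u) t := (hasDerivAt_id t).smul_const u
    simpa using h1.const_add x
  have hgderiv : ∀ t : ℝ, HasDerivAt (fun t : ℝ => p (x + t • u))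
      (fderiv ℝ p (x + t • u) u) t :=
    fun t => (hpdiff (x + t • u)).hasFDerivAt.comp_hasDerivAt t (hline t)
  set φ : ℝ → ℝ := fun t => p (x + t • u) - t ^ 2 / 2 * K + t * B with hφ
  have hφderiv : ∀ t : ℝ, HasDerivAt φ (fderiv ℝ p (x + t • u) u - t * K + B) t := by
    intro t
    have h2 : HasDerivAt (fun t : ℝ => t ^ 2 / 2 * K) (t * K) t := by
      have h := ((hasDerivAt_pow 2 t).div_const 2).mul_const K
      convert h using 1
      · rfl
      · rfl
      · norm_num
    have h3 : HasDerivAt (fun t : ℝ => t * B) B t := by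
      simpa using (hasDerivAt_id t).mul_const B
    exact ((hgderiv t).sub h2).add h3
  have hmono : MonotoneOn φ (Set.Icc 0 1) := by
    apply monotoneOn_of_deriv_nonneg (convex_Icc 0 1)
    · exact fun t _ => (hφderiv t).continuousAt.continuousWithinAt
    · exact fun t ht => ((hφderiv t).differentiableAt).differentiableWithinAt
    · intro t ht
      rw [interior_Icc] at ht
      rw [(hφderiv t).deriv]
      have := hg' t ⟨le_of_lt ht.1, le_of_lt ht.2⟩
      linarith
  have h01 := hmono (Set.left_mem_Icc.2 zero_le_one) (Set.right_mem_Icc.2 zero_le_one)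
    zero_le_one
  have hφ0 : φ 0 = p x := by simp [hφ]
  have hφ1 : φ 1 = p (x + u) - K / 2 + B := by
    simp only [hφ, one_smul, one_pow, one_mul]; ring
  have hfin : p x + K / 2 - B ≤ p (x + u) := by
    rw [hφ0, hφ1] at h01; linarith
  have hcε2 : (0 : ℝ) ≤ c * ε ^ 2 := mul_nonneg (le_of_lt hc0) (sq_nonneg ε)
  have hεb : (A₃ + 1) * (1 + c) ^ 2 * ε ≤ lam * c / 8 := by
    have h := hεε₁
    rw [le_div_iff₀ hden] at h
    nlinarith
  have h2a : A₃ * (1 + c) ^ 2 * ε ≤ lam * c / 8 := by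
    nlinarith [mul_nonneg (sq_nonneg (1 + c)) (le_of_lt hε)]
  have h1 : A₂ * ε * (c * ε) ≤ lam * c / 8 * (c * ε ^ 2) := by
    calc A₂ * ε * (c * ε) = A₂ * (c * ε ^ 2) := by ring
      _ ≤ lam * c / 8 * (c * ε ^ 2) := mul_le_mul_of_nonneg_right hcA hcε2
  have h2 : A₃ * ((1 + c) * ε) ^ 2 * (c * ε) ≤ lam * c / 8 * (c * ε ^ 2) := by
    calc A₃ * ((1 + c) * ε) ^ 2 * (c * ε) = (A₃ * (1 + c) ^ 2 * ε) * (c * ε ^ 2) := by ring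
      _ ≤ lam * c / 8 * (c * ε ^ 2) := mul_le_mul_of_nonneg_right h2a hcε2
  have hKnn : (0 : ℝ) ≤ lam * c ^ 2 * ε ^ 2 :=
    mul_nonneg (mul_nonneg (le_of_lt hlam) (sq_nonneg c)) (sq_nonneg ε)
  have hfinal : p x + c ^ 2 * ε ^ 2 * lam / 8 ≤ p x + K / 2 - B := by
    rw [hK, hB]; linarith [h1, h2, hKnn]
  exact le_trans hfinal hfin
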